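/- For a symmetric numerical semigroup S with gap set W = {w_1 < ... < w_δ} and associated partition λ, the Schur-Weierstrass polynomial σ_λ(x) depends only on the variables x_w for w ∈ W, i.e. ∂σ_λ/∂x_h = 0 for every h ∈ S, h ≥ 1. -/

import Mathlib

open MvPolynomial in
/-- The generating series `Σ_{i≥1} x_i t^i` with coefficients in `ℚ[x_1, x_2, …]`. -/
noncomputable def swGen : PowerSeries (MvPolynomial ℕ ℚ) :=
  PowerSeries.mk fun i => if i = 0 then 0 else MvPolynomial.X i

/-- The elementary Schur–Weierstrass polynomial `σ_k`, i.e. the coefficient of `t^k`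
in `exp (Σ_{i≥1} x_i t^i) = Σ_m (Σ x_i t^i)^m / m!` (the terms with `m > k` do not
contribute to the coefficient of `t^k`). -/
noncomputable def sw (k : ℕ) : MvPolynomial ℕ ℚ :=
  ∑ m ∈ Finset.range (k + 1),
    (Nat.factorial m : ℚ)⁻¹ • PowerSeries.coeff (R := MvPolynomial ℕ ℚ) k (swGen ^ m)

/-- `σ_k` for integer index, with `σ_k = 0` for `k < 0`. -/
noncomputable def swZ (k : ℤ) : MvPolynomial ℕ ℚ :=
  if 0 ≤ k then sw k.toNat else 0

section Aux
open MvPolynomial PowerSeries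

/-- Coefficientwise partial derivative on power series. -/
noncomputable def Dh (h : ℕ) (f : PowerSeries (MvPolynomial ℕ ℚ)) :
    PowerSeries (MvPolynomial ℕ ℚ) :=
  PowerSeries.mk fun n => pderiv h (PowerSeries.coeff n f)

lemma coeff_Dh (h n : ℕ) (f : PowerSeries (MvPolynomial ℕ ℚ)) :
    PowerSeries.coeff n (Dh h f) = pderiv h (PowerSeries.coeff n f) := by
  simp [Dh]

lemma Dh_mul (h : ℕ) (f g : PowerSeries (MvPolynomial ℕ ℚ)) :
    Dh h (f * g) = Dh h f * g + f * Dh h g := by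
  ext n
  simp only [coeff_Dh, PowerSeries.coeff_mul, map_sum, pderiv_mul, map_add,
    Finset.sum_add_distrib, coeff_Dh]

lemma Dh_pow (h : ℕ) (f : PowerSeries (MvPolynomial ℕ ℚ)) (m : ℕ) :
    Dh h (f ^ (m + 1)) = (m + 1) • (f ^ m * Dh h f) := by
  induction m with
  | zero => simp [Dh_mul]
  | succ m ih =>
      rw [pow_succ, Dh_mul, ih, smul_mul_assoc,
        succ_nsmul (f ^ (m+1) * Dh h f) (m+1), pow_succ]
      ring_nf

lemma Dh_swGen (h : ℕ) (hh : 1 ≤ h) :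
    Dh h swGen = (PowerSeries.X : PowerSeries (MvPolynomial ℕ ℚ)) ^ h := by
  ext n
  simp only [coeff_Dh, swGen, PowerSeries.coeff_mk, PowerSeries.coeff_X_pow]
  by_cases hn : n = 0
  · subst hn
    have : (0:ℕ) ≠ h := by omega
    simp [if_neg this]
  · simp only [if_neg hn, pderiv_X]
    by_cases hnh : n = h
    · subst hnh; simp [Pi.single_eq_same]
    · rw [Pi.single_eq_of_ne hnh, if_neg hnh]

lemma coeff_swGen_pow_lt {m n : ℕ} (hnm : n < m) :
    PowerSeries.coeff (R := MvPolynomial ℕ ℚ) n (swGen ^ m) = 0 := by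
  have hX : (PowerSeries.X : PowerSeries (MvPolynomial ℕ ℚ)) ^ m ∣ swGen ^ m := by
    refine pow_dvd_pow_of_dvd ?_ m
    rw [PowerSeries.X_dvd_iff]
    simp [swGen, PowerSeries.constantCoeff_mk]
  obtain ⟨g, hg⟩ := hX
  rw [hg, PowerSeries.coeff_mul]
  refine Finset.sum_eq_zero fun p hp => ?_
  rw [Finset.HasAntidiagonal.mem_antidiagonal] at hp
  rw [PowerSeries.coeff_X_pow, if_neg (by omega), zero_mul]

lemma pderiv_sw (h : ℕ) (hh : 1 ≤ h) (k : ℕ) :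
    pderiv h (sw k) = if h ≤ k then sw (k - h) else 0 := by
  have key : ∀ m : ℕ, pderiv h ((Nat.factorial (m+1) : ℚ)⁻¹ •
      PowerSeries.coeff (R := MvPolynomial ℕ ℚ) k (swGen ^ (m+1)))
      = if h ≤ k then (Nat.factorial m : ℚ)⁻¹ •
        PowerSeries.coeff (R := MvPolynomial ℕ ℚ) (k - h) (swGen ^ m) else 0 := by
    intro m
    rw [(pderiv h).map_smul, ← coeff_Dh, Dh_pow, Dh_swGen h hh, map_nsmul,
      ← Nat.cast_smul_eq_nsmul ℚ, smul_smul, PowerSeries.coeff_mul_X_pow']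
    by_cases hk : h ≤ k
    · rw [if_pos hk, if_pos hk]
      congr 1
      rw [Nat.factorial_succ]
      push_cast
      have : ((m:ℚ)+1) ≠ 0 := by positivity
      field_simp
    · rw [if_neg hk, if_neg hk, smul_zero]
  unfold sw
  rw [map_sum, Finset.sum_range_succ']
  have h0 : pderiv h ((Nat.factorial 0 : ℚ)⁻¹ •
      PowerSeries.coeff (R := MvPolynomial ℕ ℚ) k (swGen ^ 0)) = 0 := by
    rw [(pderiv h).map_smul, pow_zero, PowerSeries.coeff_one]
    split <;> simp
  rw [h0, add_zero]
  simp only [key]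
  by_cases hk : h ≤ k
  · simp only [if_pos hk]
    have hsub : Finset.range (k - h + 1) ⊆ Finset.range k := by
      intro x hx
      simp only [Finset.mem_range] at *
      omega
    refine (Finset.sum_subset hsub fun x hx hx' => ?_).symm
    simp only [Finset.mem_range] at hx hx'
    rw [coeff_swGen_pow_lt (by omega), smul_zero]
  · simp [if_neg hk]

lemma pderiv_swZ (h : ℕ) (hh : 1 ≤ h) (k : ℤ) :
    pderiv h (swZ k) = swZ (k - h) := by
  unfold swZ
  by_cases hk : 0 ≤ k
  · rw [if_pos hk, pderiv_sw h hh]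
    by_cases hk2 : 0 ≤ k - h
    · rw [if_pos hk2, if_pos (by omega : h ≤ k.toNat)]
      congr 1
      omega
    · rw [if_neg hk2, if_neg (by omega : ¬ h ≤ k.toNat)]
  · rw [if_neg hk, if_neg (by omega : ¬ 0 ≤ k - h), map_zero]

lemma pderiv_finset_prod (h : ℕ) {ι : Type*} [DecidableEq ι] (s : Finset ι)
    (f : ι → MvPolynomial ℕ ℚ) :
    pderiv h (∏ i ∈ s, f i) = ∑ i ∈ s, pderiv h (f i) * ∏ j ∈ s.erase i, f j := by
  induction s using Finset.induction_on with
  | empty => simp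
  | @insert a s ha ih =>
      rw [Finset.prod_insert ha, pderiv_mul, ih, Finset.sum_insert ha,
        Finset.erase_insert ha]
      rw [Finset.mul_sum]
      congr 1
      refine Finset.sum_congr rfl fun x hx => ?_
      have hxa : x ≠ a := fun hxa => ha (hxa ▸ hx)
      rw [Finset.erase_insert_of_ne hxa.symm, Finset.prod_insert (fun hc => ha (Finset.mem_of_mem_erase hc))]
      ring

lemma pderiv_det {n : ℕ} (h : ℕ) (M : Matrix (Fin n) (Fin n) (MvPolynomial ℕ ℚ)) :
    pderiv h M.det = ∑ r, (M.updateRow r fun j => pderiv h (M r j)).det := by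
  simp only [Matrix.det_apply, map_sum]
  rw [Finset.sum_comm]
  refine Finset.sum_congr rfl fun σ _ => ?_
  rw [Units.smul_def, map_zsmul, pderiv_finset_prod, Finset.smul_sum]
  rw [← Equiv.sum_comp σ
    (fun r => Equiv.Perm.sign σ • ∏ i, (M.updateRow r fun j => pderiv h (M r j)) (σ i) i)]
  refine Finset.sum_congr rfl fun i _ => ?_
  rw [Units.smul_def]
  congr 1
  rw [← Finset.mul_prod_erase Finset.univ _ (Finset.mem_univ i)]
  congr 1
  · rw [Matrix.updateRow_self]
  · refine Finset.prod_congr rfl fun j hj => ?_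
    have : σ j ≠ σ i := fun hc => (Finset.mem_erase.mp hj).1 (σ.injective hc)
    rw [Matrix.updateRow_ne this]

lemma swZ_neg {k : ℤ} (hk : k < 0) : swZ k = 0 := by
  rw [swZ, if_neg (by omega)]

end Aux

/-- The Schur–Weierstrass polynomial `σ_λ = det (σ_{λ_i + j - i})_{1 ≤ i,j ≤ m}`. -/
noncomputable def swSchur {m : ℕ} (lam : Fin m → ℕ) : MvPolynomial ℕ ℚ :=
  Matrix.det (Matrix.of fun i j : Fin m => swZ ((lam i : ℤ) + (j : ℕ) - (i : ℕ)))

section Main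
open MvPolynomial PowerSeries

/-- For a symmetric numerical semigroup `S` with gaps `w_1 < ⋯ < w_δ`
and associated partition `λ`, the Schur–Weierstrass polynomial `σ_λ` depends only
on the variables `x_w` for gaps `w`: its partial derivative with respect to `x_h`
vanishes for every nonzero `h ∈ S`. -/
theorem stmt_16 (S : Set ℕ) (h0 : 0 ∈ S)
    (hadd : ∀ a ∈ S, ∀ b ∈ S, a + b ∈ S)
    (hfin : Sᶜ.Finite) (δ : ℕ) (hδ : δ = hfin.toFinset.card)
    (hsym : ∀ w : ℕ, (w ∉ S ↔ (2 * (δ : ℤ) - 1 - w) ∈ ((fun k : ℕ => (k : ℤ)) '' S)))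
    (w : Fin δ → ℕ) (hmono : StrictMono w) (hrange : Set.range w = Sᶜ)
    (lam : Fin δ → ℕ)
    (hlam : ∀ i : Fin δ, lam i = w i.rev - ((δ - 1) - (i : ℕ))) :
    ∀ h ∈ S, 1 ≤ h → MvPolynomial.pderiv h (swSchur lam) = 0 := by
  intro h hS hh
  -- basic facts
  have hwge' : ∀ n : ℕ, ∀ hn : n < δ, n ≤ w ⟨n, hn⟩ := by
    intro n
    induction n with
    | zero => intro _; exact Nat.zero_le _
    | succ n ih =>
        intro hn
        have h1 : n < δ := by omega
        have h2 := hmono (show (⟨n, h1⟩ : Fin δ) < ⟨n+1, hn⟩ from by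
          simp [Fin.lt_def])
        have h3 := ih h1
        omega
  have hwge : ∀ k : Fin δ, (k : ℕ) ≤ w k := by
    intro k
    have := hwge' k.val k.isLt
    simpa using this
  have lamZ : ∀ i : Fin δ, (lam i : ℤ) = (w i.rev : ℤ) - ((δ : ℤ) - 1) + (i : ℕ) := by
    intro i
    have h1 : (i.rev : ℕ) = δ - 1 - (i : ℕ) := by
      rw [Fin.val_rev]; omega
    have h2 := hwge i.rev
    have h3 : (i : ℕ) < δ := i.isLt
    rw [hlam i]
    omega
  set M : Matrix (Fin δ) (Fin δ) (MvPolynomial ℕ ℚ) :=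
    Matrix.of fun i j : Fin δ => swZ ((lam i : ℤ) + (j : ℕ) - (i : ℕ)) with hM
  have MZ : ∀ i j : Fin δ, M i j = swZ ((w i.rev : ℤ) + (j : ℕ) - ((δ : ℤ) - 1)) := by
    intro i j
    show swZ ((lam i : ℤ) + (j : ℕ) - (i : ℕ)) = _
    rw [lamZ i]
    ring_nf
  unfold swSchur
  rw [← hM, pderiv_det]
  refine Finset.sum_eq_zero fun r _ => ?_
  have pent : ∀ j : Fin δ, pderiv h (M r j) =
      swZ ((w r.rev : ℤ) + (j : ℕ) - ((δ : ℤ) - 1) - h) := by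
    intro j
    rw [MZ r j, pderiv_swZ h hh]
  by_cases hcase : h ≤ w r.rev
  · -- w r.rev - h is a gap: duplicate rows
    have hgap : w r.rev ∉ S := by
      have : w r.rev ∈ Set.range w := ⟨r.rev, rfl⟩
      rw [hrange] at this
      exact this
    have hgap2 : w r.rev - h ∉ S := by
      intro hmem
      have := hadd _ hmem _ hS
      rw [Nat.sub_add_cancel hcase] at this
      exact hgap this
    have : w r.rev - h ∈ Set.range w := by rw [hrange]; exact hgap2
    obtain ⟨k, hk⟩ := this
    have hwk : (w k : ℤ) = (w r.rev : ℤ) - h := by omega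
    have hkne : k.rev ≠ r := by
      intro he
      have : k = r.rev := by rw [← he, Fin.rev_rev]
      rw [this] at hwk
      omega
    refine Matrix.det_zero_of_row_eq hkne.symm ?_
    funext j
    rw [Matrix.updateRow_self, Matrix.updateRow_ne hkne, pent j, MZ k.rev j,
      Fin.rev_rev, hwk]
    ring_nf
  · -- all entries of the row are zero
    refine Matrix.det_eq_zero_of_row_eq_zero r fun j => ?_
    rw [Matrix.updateRow_self, pent j, swZ_neg]
    have : (j : ℕ) < δ := j.isLt
    omega

end Main
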